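/- For all real numbers β, η with 0 < β < 1 and 0 < η < 1, the integral ∫₀^η dv / ((1-v) v^β) is comparable to η^{1-β}/(1-β) + log(1/(1-η)), with implied constants independent of β and η. That is, there exist absolute constants c, C > 0 such that c·(η^{1-β}/(1-β) + log(1/(1-η))) ≤ ∫₀^η dv/((1-v)v^β) ≤ C·(η^{1-β}/(1-β) + log(1/(1-η))). -/

import Mathlib

open MeasureTheory Real

theorem integral_one_div_one_sub_mul_rpow_comparable :
    ∃ c C : ℝ, 0 < c ∧ 0 < C ∧
      ∀ β η : ℝ, 0 < β → β < 1 → 0 < η → η < 1 →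
        c * (η ^ (1 - β) / (1 - β) + Real.log (1 / (1 - η))) ≤
            ∫ v in Set.Ioo (0 : ℝ) η, 1 / ((1 - v) * v ^ β) ∧
        (∫ v in Set.Ioo (0 : ℝ) η, 1 / ((1 - v) * v ^ β)) ≤
            C * (η ^ (1 - β) / (1 - β) + Real.log (1 / (1 - η))) := by
  refine ⟨1/2, 1, by norm_num, one_pos, ?_⟩
  intro β η hβ0 hβ1 hη0 hη1
  have h1β : (0:ℝ) < 1 - β := by linarith
  have h1η : (0:ℝ) < 1 - η := by linarith
  -- integrability of v ^ (-β)
  have hg_int : IntegrableOn (fun v : ℝ => v ^ (-β)) (Set.Ioo 0 η) := by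
    have h := intervalIntegral.intervalIntegrable_rpow' (a:=0) (b:=η) (r := -β)
      (by linarith)
    rw [intervalIntegrable_iff] at h
    exact h.mono_set (by rw [Set.uIoc_of_le hη0.le]; exact Set.Ioo_subset_Ioc_self)
  -- integrability of 1/(1-v)
  have hh_int : IntegrableOn (fun v : ℝ => 1/(1-v)) (Set.Ioo 0 η) := by
    have hc : IntegrableOn (fun v : ℝ => 1/(1-v)) (Set.Icc 0 η) := by
      apply ContinuousOn.integrableOn_Icc
      apply ContinuousOn.div continuousOn_const
        (continuous_const.sub continuous_id).continuousOn
      intro x hx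
      have := hx.2
      intro h0
      change 1 - x = 0 at h0
      linarith
    exact hc.mono_set Set.Ioo_subset_Icc_self
  -- value of ∫ v^(-β)
  have hg_val : ∫ v in Set.Ioo (0:ℝ) η, v ^ (-β) = η ^ (1-β)/(1-β) := by
    rw [← MeasureTheory.integral_Ioc_eq_integral_Ioo,
      ← intervalIntegral.integral_of_le hη0.le,
      integral_rpow (Or.inl (by linarith)),
      Real.zero_rpow (by linarith), sub_zero, show -β + 1 = 1 - β from by ring]
  -- value of ∫ 1/(1-v)
  have hh_val : ∫ v in Set.Ioo (0:ℝ) η, 1/(1-v) = Real.log (1/(1-η)) := by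
    rw [← MeasureTheory.integral_Ioc_eq_integral_Ioo,
      ← intervalIntegral.integral_of_le hη0.le]
    have h := intervalIntegral.integral_comp_sub_left (a:=(0:ℝ)) (b:=η)
      (fun u : ℝ => 1/u) 1
    rw [h, sub_zero, integral_one_div]
    intro h0
    rw [Set.uIcc_of_le (by linarith)] at h0
    have := h0.1
    linarith
  -- pointwise bounds
  have key : ∀ v ∈ Set.Ioo (0:ℝ) η,
      (v ^ (-β) ≤ 1/((1-v)*v^β)) ∧ (1/(1-v) ≤ 1/((1-v)*v^β)) ∧
      (1/((1-v)*v^β) ≤ v ^ (-β) + 1/(1-v)) := by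
    intro v hv
    obtain ⟨hv0, hvη⟩ := hv
    have hv1 : v < 1 := by linarith
    have h1v : (0:ℝ) < 1 - v := by linarith
    have hvb : 0 < v ^ β := Real.rpow_pos_of_pos hv0 β
    have hneg : v ^ (-β) = 1 / v ^ β := by
      rw [Real.rpow_neg hv0.le, one_div]
    have hle1 : v ^ β ≤ 1 := Real.rpow_le_one hv0.le hv1.le hβ0.le
    have hvβ : v ≤ v ^ β := by
      calc v = v ^ (1:ℝ) := (Real.rpow_one v).symm
        _ ≤ v ^ β := Real.rpow_le_rpow_of_exponent_ge hv0 hv1.le hβ1.le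
    refine ⟨?_, ?_, ?_⟩
    · rw [hneg]
      apply one_div_le_one_div_of_le (mul_pos h1v hvb)
      exact mul_le_of_le_one_left hvb.le (by linarith)
    · apply one_div_le_one_div_of_le (mul_pos h1v hvb)
      exact mul_le_of_le_one_right h1v.le hle1
    · have h1 : 1/((1-v)*v^β) ≤ ((1-v) + v^β)/((1-v)*v^β) := by
        gcongr
        linarith
      have h2 : 1/v^β + 1/(1-v) = ((1-v) + v^β)/((1-v)*v^β) := by
        rw [div_add_div _ _ hvb.ne' h1v.ne']
        ring
      rw [hneg]
      linarith [h1, h2]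
  -- integrability of the main integrand
  have hf_meas : AEStronglyMeasurable (fun v : ℝ => 1/((1-v)*v^β))
      (volume.restrict (Set.Ioo (0:ℝ) η)) := by
    apply Measurable.aestronglyMeasurable
    fun_prop
  have hf_int : IntegrableOn (fun v : ℝ => 1/((1-v)*v^β)) (Set.Ioo 0 η) := by
    apply Integrable.mono' (hg_int.add hh_int) hf_meas
    rw [ae_restrict_iff' measurableSet_Ioo]
    filter_upwards with v
    intro hv
    have h1v : (0:ℝ) < 1 - v := by have := hv.2; linarith
    have hvb : 0 < v ^ β := Real.rpow_pos_of_pos hv.1 β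
    rw [Real.norm_of_nonneg (by positivity)]
    exact (key v hv).2.2
  have hle_g : ∫ v in Set.Ioo (0:ℝ) η, v ^ (-β) ≤
      ∫ v in Set.Ioo (0:ℝ) η, 1/((1-v)*v^β) :=
    setIntegral_mono_on hg_int hf_int measurableSet_Ioo
      (fun v hv => (key v hv).1)
  have hle_h : ∫ v in Set.Ioo (0:ℝ) η, 1/(1-v) ≤
      ∫ v in Set.Ioo (0:ℝ) η, 1/((1-v)*v^β) :=
    setIntegral_mono_on hh_int hf_int measurableSet_Ioo
      (fun v hv => (key v hv).2.1)
  have hle_sum : ∫ v in Set.Ioo (0:ℝ) η, 1/((1-v)*v^β) ≤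
      ∫ v in Set.Ioo (0:ℝ) η, (v ^ (-β) + 1/(1-v)) :=
    setIntegral_mono_on hf_int (hg_int.add hh_int) measurableSet_Ioo
      (fun v hv => (key v hv).2.2)
  rw [MeasureTheory.integral_add hg_int hh_int, hg_val, hh_val] at hle_sum
  rw [hg_val] at hle_g
  rw [hh_val] at hle_h
  constructor
  · linarith
  · linarith
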